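/- Let x_1 ≤ x_2 ≤ … ≤ x_n be real numbers, let u < v ≤ a ≤ n be indices, let μ_{v,a} be the arithmetic mean of x_v, …, x_a, and let c be any real number with μ_{v,a} ≤ c. Then ∑_{ℓ=u}^{v−1} (x_ℓ − c)² + CC(v, a) ≥ CC(u, a), where CC denotes the squared-distance cluster cost. -/

import Mathlib

/-- The squared-distance cluster cost of grouping `x_i, …, x_j` into one cluster
with the optimal centroid (the arithmetic mean). -/
noncomputable def clusterCost (x : ℕ → ℝ) (i j : ℕ) : ℝ :=
  ∑ ℓ ∈ Finset.Icc i j,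
    (x ℓ - (∑ t ∈ Finset.Icc i j, x t) / ((Finset.Icc i j).card : ℝ)) ^ 2

lemma clusterCost_le_sum_sq (x : ℕ → ℝ) (i j : ℕ) (m : ℝ) :
    clusterCost x i j ≤ ∑ ℓ ∈ Finset.Icc i j, (x ℓ - m) ^ 2 := by
  classical
  set s := Finset.Icc i j with hs
  by_cases hemp : s = ∅
  · simp [clusterCost, ← hs, hemp]
  · have hcard : (0 : ℝ) < (s.card : ℝ) := by
      have : 0 < s.card := Finset.card_pos.mpr (Finset.nonempty_of_ne_empty hemp)
      exact_mod_cast this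
    set μ := (∑ t ∈ s, x t) / (s.card : ℝ) with hμ
    have hsum : ∑ ℓ ∈ s, (x ℓ - μ) = 0 := by
      rw [Finset.sum_sub_distrib, Finset.sum_const, nsmul_eq_mul, hμ]
      field_simp
      ring
    have key : ∑ ℓ ∈ s, (x ℓ - m) ^ 2
        = (∑ ℓ ∈ s, (x ℓ - μ) ^ 2) + (s.card : ℝ) * (μ - m) ^ 2 := by
      have : ∀ ℓ, (x ℓ - m) ^ 2 = (x ℓ - μ) ^ 2 + 2 * (μ - m) * (x ℓ - μ) + (μ - m) ^ 2 := by
        intro ℓ; ring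
      rw [Finset.sum_congr rfl fun ℓ _ => this ℓ]
      rw [Finset.sum_add_distrib, Finset.sum_add_distrib, ← Finset.mul_sum, hsum,
        Finset.sum_const, nsmul_eq_mul]
      ring
    have : (0 : ℝ) ≤ (s.card : ℝ) * (μ - m) ^ 2 :=
      mul_nonneg (le_of_lt hcard) (sq_nonneg _)
    unfold clusterCost
    rw [← hs, ← hμ, key]
    linarith

theorem clusterCost_shift_centroid (n : ℕ) (x : ℕ → ℝ)
    (hsort : ∀ ⦃p q : ℕ⦄, 1 ≤ p → p ≤ q → q ≤ n → x p ≤ x q)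
    (u v a : ℕ) (hu : 1 ≤ u) (huv : u < v) (hva : v ≤ a) (han : a ≤ n)
    (c : ℝ) (hc : (∑ t ∈ Finset.Icc v a, x t) / ((Finset.Icc v a).card : ℝ) ≤ c) :
    (∑ ℓ ∈ Finset.Icc u (v - 1), (x ℓ - c) ^ 2) + clusterCost x v a
      ≥ clusterCost x u a := by
  classical
  set μ := (∑ t ∈ Finset.Icc v a, x t) / ((Finset.Icc v a).card : ℝ) with hμ
  have hv1 : 1 ≤ v := le_trans hu (le_of_lt huv)
  have hcardpos : 0 < (Finset.Icc v a).card := by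
    rw [Nat.card_Icc]; omega
  have hcardR : (0 : ℝ) < ((Finset.Icc v a).card : ℝ) := by exact_mod_cast hcardpos
  -- each x ℓ for ℓ ≤ v-1 (with ℓ ≥ u) is ≤ μ
  have hxle : ∀ ℓ ∈ Finset.Icc u (v - 1), x ℓ ≤ μ := by
    intro ℓ hℓ
    rw [Finset.mem_Icc] at hℓ
    have hbound : ∀ t ∈ Finset.Icc v a, x ℓ ≤ x t := by
      intro t ht
      rw [Finset.mem_Icc] at ht
      exact hsort (le_trans hu hℓ.1) (by omega) (by omega)
    have hsumge : ((Finset.Icc v a).card : ℝ) * x ℓ ≤ ∑ t ∈ Finset.Icc v a, x t := by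
      calc ((Finset.Icc v a).card : ℝ) * x ℓ = ∑ _t ∈ Finset.Icc v a, x ℓ := by
            rw [Finset.sum_const, nsmul_eq_mul]
        _ ≤ ∑ t ∈ Finset.Icc v a, x t := Finset.sum_le_sum hbound
    rw [hμ, le_div_iff₀ hcardR]
    linarith
  -- pointwise: (x ℓ - μ)^2 ≤ (x ℓ - c)^2
  have hpt : ∑ ℓ ∈ Finset.Icc u (v - 1), (x ℓ - μ) ^ 2
      ≤ ∑ ℓ ∈ Finset.Icc u (v - 1), (x ℓ - c) ^ 2 := by
    apply Finset.sum_le_sum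
    intro ℓ hℓ
    have h1 : x ℓ ≤ μ := hxle ℓ hℓ
    nlinarith [hc]
  -- split Icc u a
  have hsplit : Finset.Icc u a = Finset.Icc u (v - 1) ∪ Finset.Icc v a := by
    ext t
    simp only [Finset.mem_union, Finset.mem_Icc]
    omega
  have hdisj : Disjoint (Finset.Icc u (v - 1)) (Finset.Icc v a) := by
    rw [Finset.disjoint_left]
    intro t ht ht'
    rw [Finset.mem_Icc] at ht ht'
    omega
  have hCC : clusterCost x u a ≤ ∑ ℓ ∈ Finset.Icc u a, (x ℓ - μ) ^ 2 :=
    clusterCost_le_sum_sq x u a μ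
  rw [hsplit, Finset.sum_union hdisj] at hCC
  have : clusterCost x v a = ∑ ℓ ∈ Finset.Icc v a, (x ℓ - μ) ^ 2 := rfl
  rw [ge_iff_le, this]
  linarith
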